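/- Let Y be a real-valued random variable with E[Y] = 0 and suppose that for some b > 0, E[exp(b Y²)] ≤ 2. Then for all λ ≥ 0, E[exp(λY)] ≤ exp(3λ²/(2b)). -/

import Mathlib

open MeasureTheory

/-- `exp x ≤ 1 + x + x ^ 2` for `|x| ≤ 1`. -/
lemma exp_le_one_add_sq {x : ℝ} (hx : |x| ≤ 1) : Real.exp x ≤ 1 + x + x ^ 2 := by
  have h := Real.exp_bound hx (n := 2) (by norm_num)
  have h1 := (abs_sub_le_iff.1 h).1
  have hsum : (∑ m ∈ Finset.range 2, x ^ m / m.factorial) = 1 + x := by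
    simp [Finset.sum_range_succ]
  have h2 : |x| ^ 2 = x ^ 2 := sq_abs x
  rw [hsum, h2] at h1
  norm_num [Nat.factorial] at h1
  nlinarith [sq_nonneg x]

/-- `exp x ≤ x + exp (x ^ 2)` for all real `x`. -/
lemma exp_le_add_exp_sq (x : ℝ) : Real.exp x ≤ x + Real.exp (x ^ 2) := by
  rcases le_or_gt 1 x with h1 | h1
  · have hx2 : x ≤ x ^ 2 := by nlinarith
    have := Real.exp_le_exp.2 hx2
    linarith
  rcases le_or_gt x (-1) with h2 | h2
  · have he : Real.exp x ≤ 1 := Real.exp_le_one_iff.2 (by linarith)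
    have hq : 1 + x ^ 2 ≤ Real.exp (x ^ 2) := by
      have := Real.add_one_le_exp (x ^ 2); linarith
    nlinarith
  · have hx : |x| ≤ 1 := abs_le.2 ⟨by linarith, by linarith⟩
    have h3 := exp_le_one_add_sq hx
    have hq : 1 + x ^ 2 ≤ Real.exp (x ^ 2) := by
      have := Real.add_one_le_exp (x ^ 2); linarith
    linarith

/-- Convexity bound: for `t ∈ [0,1]`, `exp (t * s) ≤ 1 - t + t * exp s`. -/
lemma exp_mul_le (t s : ℝ) (ht0 : 0 ≤ t) (ht1 : t ≤ 1) :
    Real.exp (t * s) ≤ 1 - t + t * Real.exp s := by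
  have h := convexOn_exp.2 (Set.mem_univ 0) (Set.mem_univ s)
    (by linarith : (0:ℝ) ≤ 1 - t) ht0 (by ring)
  simp only [smul_eq_mul, mul_zero, zero_add, Real.exp_zero, mul_one] at h
  linarith

/-- **Sub-Gaussian moment generating function bound.**  If `Y` is a centered real random
variable with `E[exp(b Y²)] ≤ 2` for some `b > 0`, then `E[exp(λY)] ≤ exp(3λ²/(2b))` for
all `λ ≥ 0`. -/
theorem subgaussian_mgf_bound
    {Ω' : Type*} [MeasurableSpace Ω'] (μ : Measure Ω') [IsProbabilityMeasure μ]
    (Y : Ω' → ℝ) (hYint : Integrable Y μ) (hY0 : (∫ w, Y w ∂μ) = 0)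
    (b : ℝ) (hb : 0 < b)
    (hint : Integrable (fun w => Real.exp (b * Y w ^ 2)) μ)
    (hsg : (∫ w, Real.exp (b * Y w ^ 2) ∂μ) ≤ 2) :
    ∀ l : ℝ, 0 ≤ l → (∫ w, Real.exp (l * Y w) ∂μ) ≤ Real.exp (3 * l ^ 2 / (2 * b)) := by
  intro l hl
  have h2b : (0:ℝ) < 2 * b := by linarith
  -- measurability of exp (l * Y)
  have hmeas : AEStronglyMeasurable (fun w => Real.exp (l * Y w)) μ :=
    (Real.continuous_exp.comp (continuous_const.mul continuous_id)).comp_aestronglyMeasurable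
      hYint.aestronglyMeasurable
  -- pointwise domination: exp (l * x) ≤ exp (l²/(2b)) * exp (b x²)
  have hdom : ∀ x : ℝ, Real.exp (l * x) ≤ Real.exp (l ^ 2 / (2 * b)) * Real.exp (b * x ^ 2) := by
    intro x
    rw [← Real.exp_add]
    apply Real.exp_le_exp.2
    rw [div_add' _ _ _ h2b.ne', le_div_iff₀ h2b]
    nlinarith [sq_nonneg (l - b * x), sq_nonneg (b * x)]
  -- integrability of exp (l * Y)
  have hintl : Integrable (fun w => Real.exp (l * Y w)) μ := by
    refine Integrable.mono (hint.const_mul (Real.exp (l ^ 2 / (2 * b)))) hmeas ?_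
    filter_upwards with w
    rw [Real.norm_eq_abs, Real.norm_eq_abs, abs_of_nonneg (Real.exp_pos _).le,
      abs_of_nonneg (by positivity)]
    exact hdom (Y w)
  rcases le_or_gt (l ^ 2) b with hcase | hcase
  · -- small λ case: use exp x ≤ x + exp x² and convexity
    set t : ℝ := l ^ 2 / b with ht
    have ht0 : 0 ≤ t := by positivity
    have ht1 : t ≤ 1 := by rw [ht, div_le_one hb]; exact hcase
    have hpt : ∀ w, Real.exp (l * Y w) ≤
        l * Y w + ((1 - t) + t * Real.exp (b * Y w ^ 2)) := by
      intro w
      have h1 := exp_le_add_exp_sq (l * Y w)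
      have h2 : (l * Y w) ^ 2 = t * (b * Y w ^ 2) := by
        rw [ht]; field_simp
      have h3 := exp_mul_le t (b * Y w ^ 2) ht0 ht1
      rw [h2] at h1
      linarith
    have hg2 : Integrable (fun w => (1 - t) + t * Real.exp (b * Y w ^ 2)) μ :=
      (integrable_const (1 - t)).add (hint.const_mul t)
    have hrhsint : Integrable (fun w => l * Y w + ((1 - t) + t * Real.exp (b * Y w ^ 2))) μ :=
      (hYint.const_mul l).add hg2
    have hI := integral_mono hintl hrhsint (fun w => hpt w)
    rw [integral_add (hYint.const_mul l) hg2,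
      integral_add (integrable_const (1 - t)) (hint.const_mul t),
      integral_const_mul, integral_const_mul, hY0, integral_const] at hI
    simp only [measure_univ, probReal_univ, ENNReal.toReal_one, smul_eq_mul, one_mul, mul_zero, zero_add] at hI
    have hI2 : (∫ w, Real.exp (l * Y w) ∂μ) ≤ 1 + t := by nlinarith
    have hexp : 1 + t ≤ Real.exp (3 * l ^ 2 / (2 * b)) := by
      have h1 : t ≤ 3 * l ^ 2 / (2 * b) := by
        rw [ht, div_le_div_iff₀ hb h2b]; nlinarith
      calc 1 + t ≤ Real.exp t := by have := Real.add_one_le_exp t; linarith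
        _ ≤ _ := Real.exp_le_exp.2 h1
    linarith
  · -- large λ case: exp (l x) ≤ exp (l²/(2b)) * (1 + exp (b x²))/2
    have hpt : ∀ w, Real.exp (l * Y w) ≤
        Real.exp (l ^ 2 / (2 * b)) * ((1 + Real.exp (b * Y w ^ 2)) / 2) := by
      intro w
      have h1 : Real.exp (l * Y w) ≤ Real.exp (l ^ 2 / (2 * b)) * Real.exp (b * Y w ^ 2 / 2) := by
        rw [← Real.exp_add]
        apply Real.exp_le_exp.2
        rw [div_add_div _ _ h2b.ne' (two_ne_zero), le_div_iff₀ (by positivity)]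
        nlinarith [sq_nonneg (l - b * Y w)]
      have h2 : Real.exp (b * Y w ^ 2 / 2) ≤ (1 + Real.exp (b * Y w ^ 2)) / 2 := by
        have hu : Real.exp (b * Y w ^ 2 / 2) ^ 2 = Real.exp (b * Y w ^ 2) := by
          rw [← Real.exp_nat_mul]; ring_nf
        nlinarith [sq_nonneg (Real.exp (b * Y w ^ 2 / 2) - 1), Real.exp_pos (b * Y w ^ 2 / 2)]
      calc Real.exp (l * Y w) ≤ _ := h1
        _ ≤ _ := mul_le_mul_of_nonneg_left h2 (Real.exp_pos _).le
    have hrhsint : Integrable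
        (fun w => Real.exp (l ^ 2 / (2 * b)) * ((1 + Real.exp (b * Y w ^ 2)) / 2)) μ := by
      apply Integrable.const_mul
      exact ((integrable_const (1:ℝ)).add hint).div_const 2
    have hI := integral_mono hintl hrhsint (fun w => hpt w)
    rw [integral_const_mul] at hI
    have hI2 : (∫ w, (1 + Real.exp (b * Y w ^ 2)) / 2 ∂μ) ≤ 3 / 2 := by
      rw [integral_div, integral_add (integrable_const (1:ℝ)) hint, integral_const]
      simp only [measure_univ, probReal_univ, ENNReal.toReal_one, smul_eq_mul, one_mul]
      linarith
    have h32 : (3:ℝ) / 2 ≤ Real.exp (l ^ 2 / b) := by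
      have h1 : (1:ℝ) ≤ l ^ 2 / b := (one_le_div hb).2 hcase.le
      calc (3:ℝ)/2 ≤ Real.exp 1 := by
            have := Real.add_one_le_exp (1:ℝ); linarith
        _ ≤ _ := Real.exp_le_exp.2 h1
    have hfin : Real.exp (l ^ 2 / (2 * b)) * (3 / 2) ≤ Real.exp (3 * l ^ 2 / (2 * b)) := by
      calc Real.exp (l ^ 2 / (2 * b)) * (3 / 2)
          ≤ Real.exp (l ^ 2 / (2 * b)) * Real.exp (l ^ 2 / b) :=
            mul_le_mul_of_nonneg_left h32 (Real.exp_pos _).le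
        _ = Real.exp (l ^ 2 / (2 * b) + l ^ 2 / b) := (Real.exp_add _ _).symm
        _ = Real.exp (3 * l ^ 2 / (2 * b)) := by
            congr 1; field_simp; ring
    calc (∫ w, Real.exp (l * Y w) ∂μ)
        ≤ Real.exp (l ^ 2 / (2 * b)) * ∫ w, (1 + Real.exp (b * Y w ^ 2)) / 2 ∂μ := hI
      _ ≤ Real.exp (l ^ 2 / (2 * b)) * (3 / 2) :=
          mul_le_mul_of_nonneg_left hI2 (Real.exp_pos _).le
      _ ≤ _ := hfin
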